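/- Let V₁ and V₂ be real vector spaces, and for i = 1,2 let T_i be a quadrilinear form on V_i with curvature symmetries and ω_i an alternating quadrilinear form on V_i such that T_i + ω_i is positive semidefinite on ∧²V_i. On V = V₁ × V₂ define T(X,Y,Z,W) = T₁(X₁,Y₁,Z₁,W₁) + T₂(X₂,Y₂,Z₂,W₂) and ω(X,Y,Z,W) = ω₁(X₁,Y₁,Z₁,W₁) + ω₂(X₂,Y₂,Z₂,W₂), where subscripts 1 and 2 denote the components of vectors of V. Then T has curvature symmetries, ω is alternating, and T + ω is positive semidefinite on ∧²V. (T is the curvature form of a Riemannian product metric; hence products preserve strongly nonnegative curvature.) -/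

import Mathlib

/-- A quadrilinear form: linear in each of the four arguments. -/
def IsQuadrilinear {V : Type*} [AddCommGroup V] [Module ℝ V]
    (T : V → V → V → V → ℝ) : Prop :=
  (∀ x x' y z w, T (x + x') y z w = T x y z w + T x' y z w) ∧
  (∀ (c : ℝ) x y z w, T (c • x) y z w = c * T x y z w) ∧
  (∀ x y y' z w, T x (y + y') z w = T x y z w + T x y' z w) ∧
  (∀ (c : ℝ) x y z w, T x (c • y) z w = c * T x y z w) ∧
  (∀ x y z z' w, T x y (z + z') w = T x y z w + T x y z' w) ∧
  (∀ (c : ℝ) x y z w, T x y (c • z) w = c * T x y z w) ∧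
  (∀ x y z w w', T x y z (w + w') = T x y z w + T x y z w') ∧
  (∀ (c : ℝ) x y z w, T x y z (c • w) = c * T x y z w)

/-- Curvature symmetries: antisymmetry in the first pair and symmetry under
exchange of the two pairs (such forms correspond to symmetric operators on `∧²V`). -/
def HasCurvatureSymmetries {V : Type*} (T : V → V → V → V → ℝ) : Prop :=
  (∀ x y z w, T x y z w = - T y x z w) ∧ (∀ x y z w, T x y z w = T z w x y)

/-- An alternating quadrilinear form (a 4-form): it vanishes whenever two arguments coincide. -/
def IsAlternating4 {V : Type*} (ω : V → V → V → V → ℝ) : Prop :=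
  ∀ x₁ x₂ x₃ x₄, (x₁ = x₂ ∨ x₁ = x₃ ∨ x₁ = x₄ ∨ x₂ = x₃ ∨ x₂ = x₄ ∨ x₃ = x₄) →
    ω x₁ x₂ x₃ x₄ = 0

/-- The Bianchi map. -/
noncomputable def bianchi {V : Type*} (T : V → V → V → V → ℝ) : V → V → V → V → ℝ :=
  fun x y z w => (1/3) * (T x y z w + T y z x w + T z x y w)

/-- Positive semidefiniteness on `∧²V` of a quadrilinear form with curvature symmetries. -/
def PosSemidefWedge {V : Type*} (T : V → V → V → V → ℝ) : Prop :=
  ∀ (m : ℕ) (X Y : Fin m → V), 0 ≤ ∑ i, ∑ j, T (X i) (Y i) (X j) (Y j)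

/-- products preserve strongly nonnegative curvature: if `T_i + ω_i` is
positive semidefinite on `∧²V_i` for `i = 1, 2`, then on `V = V₁ × V₂` the sum form
`T(X,Y,Z,W) = T₁(X₁,Y₁,Z₁,W₁) + T₂(X₂,Y₂,Z₂,W₂)` has curvature symmetries, the sum
form `ω` is alternating, and `T + ω` is positive semidefinite on `∧²V`. -/
theorem product_preserves_strongly_nonneg
    {V₁ V₂ : Type*} [AddCommGroup V₁] [Module ℝ V₁] [AddCommGroup V₂] [Module ℝ V₂]
    (T₁ ω₁ : V₁ → V₁ → V₁ → V₁ → ℝ) (T₂ ω₂ : V₂ → V₂ → V₂ → V₂ → ℝ)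
    (hT₁quad : IsQuadrilinear T₁) (hT₁sym : HasCurvatureSymmetries T₁)
    (hω₁quad : IsQuadrilinear ω₁) (hω₁alt : IsAlternating4 ω₁)
    (hpsd₁ : PosSemidefWedge (fun x y z w => T₁ x y z w + ω₁ x y z w))
    (hT₂quad : IsQuadrilinear T₂) (hT₂sym : HasCurvatureSymmetries T₂)
    (hω₂quad : IsQuadrilinear ω₂) (hω₂alt : IsAlternating4 ω₂)
    (hpsd₂ : PosSemidefWedge (fun x y z w => T₂ x y z w + ω₂ x y z w)) :
    HasCurvatureSymmetries (fun X Y Z W : V₁ × V₂ =>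
      T₁ X.1 Y.1 Z.1 W.1 + T₂ X.2 Y.2 Z.2 W.2) ∧
    IsAlternating4 (fun X Y Z W : V₁ × V₂ =>
      ω₁ X.1 Y.1 Z.1 W.1 + ω₂ X.2 Y.2 Z.2 W.2) ∧
    PosSemidefWedge (fun X Y Z W : V₁ × V₂ =>
      (T₁ X.1 Y.1 Z.1 W.1 + T₂ X.2 Y.2 Z.2 W.2)
      + (ω₁ X.1 Y.1 Z.1 W.1 + ω₂ X.2 Y.2 Z.2 W.2)) := by
  refine ⟨⟨fun x y z w => ?_, fun x y z w => ?_⟩, fun x₁ x₂ x₃ x₄ h => ?_, fun m X Y => ?_⟩ <;> dsimp only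
  · rw [hT₁sym.1, hT₂sym.1]; ring
  · rw [hT₁sym.2, hT₂sym.2]
  · rw [hω₁alt x₁.1 x₂.1 x₃.1 x₄.1, hω₂alt x₁.2 x₂.2 x₃.2 x₄.2] <;>
      [skip; rcases h with h|h|h|h|h|h <;> subst h <;> tauto;
       rcases h with h|h|h|h|h|h <;> subst h <;> tauto]
    ring
  · have h1 := hpsd₁ m (fun i => (X i).1) (fun i => (Y i).1)
    have h2 := hpsd₂ m (fun i => (X i).2) (fun i => (Y i).2)
    simp only [← Finset.sum_add_distrib] at h1 h2 ⊢
    have := add_nonneg h1 h2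
    rw [← Finset.sum_add_distrib] at this
    convert this using 2 with i
    case e'_2 => rfl
    rw [← Finset.sum_add_distrib]
    exact Finset.sum_congr rfl fun j _ => by ring
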